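/- Let T_m be a local commutative ring finite free over ℤ_p with maximal ideal m. If there exists a T_m-module isomorphism T_m^{⊕2} ≅ (Hom_{ℤ_p}(T_m, ℤ_p))^{⊕2}, then T_m ≅ Hom_{ℤ_p}(T_m, ℤ_p) as T_m-modules (i.e., T_m is Gorenstein). -/

import Mathlib

open TensorProduct

/-- Let `T_m` be a local commutative ring finite free over `ℤ_p` with maximal
ideal `m`, and let `D = Hom_{ℤ_p}(T_m, ℤ_p)` be the `ℤ_p`-linear dual with its natural
`T_m`-module structure (encoded: a `T_m`-module `D` with a perfect `ℤ_p`-bilinear pairing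
`B : D × T_m → ℤ_p` satisfying `B(t•d, x) = B(d, t*x)`).  If `T_m^{⊕2} ≅ D^{⊕2}` as
`T_m`-modules, then `T_m ≅ D` as `T_m`-modules, i.e. `T_m` is Gorenstein. -/
theorem statement10
    (p : ℕ) [Fact p.Prime]
    (Tm : Type*) [CommRing Tm] [IsLocalRing Tm] [Algebra ℤ_[p] Tm]
    [Module.Free ℤ_[p] Tm] [Module.Finite ℤ_[p] Tm]
    (D : Type*) [AddCommGroup D] [Module Tm D] [Module ℤ_[p] D] [IsScalarTower ℤ_[p] Tm D]
    (B : D →ₗ[ℤ_[p]] Tm →ₗ[ℤ_[p]] ℤ_[p])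
    (hBperfect : Function.Bijective B)
    (hBcompat : ∀ (t : Tm) (d : D) (x : Tm), B (t • d) x = B d (t * x))
    (h2 : Nonempty ((Fin 2 → Tm) ≃ₗ[Tm] (Fin 2 → D))) :
    Nonempty (Tm ≃ₗ[Tm] D) := by
  obtain ⟨e⟩ := h2
  -- D is finitely generated over Tm
  have hfin : Module.Finite Tm D := by
    refine Module.Finite.of_surjective
      ((LinearMap.proj (0 : Fin 2)).comp e.toLinearMap) (fun d => ?_)
    exact ⟨e.symm (fun _ => d), by simp⟩
  -- D is projective over Tm: split off from a free module
  have hproj : Module.Projective Tm D := by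
    refine Module.Projective.of_split
      (e.symm.toLinearMap.comp (LinearMap.single Tm (fun _ : Fin 2 => D) 0))
      ((LinearMap.proj (0 : Fin 2)).comp e.toLinearMap) ?_
    ext d
    simp
  have hfp : Module.FinitePresentation Tm D := Module.finitePresentation_of_projective _ _
  have hfree : Module.Free Tm D := Module.free_of_flat_of_isLocalRing
  -- choose a basis of D over Tm
  let ι := Module.Free.ChooseBasisIndex Tm D
  have : Fintype ι := Module.Free.ChooseBasisIndex.fintype Tm D
  let b : Module.Basis ι Tm D := Module.Free.chooseBasis Tm D
  -- transport the iso to count ranks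
  let e2 : (Fin 2 → Tm) ≃ₗ[Tm] (Fin 2 × ι → Tm) :=
    e ≪≫ₗ (LinearEquiv.piCongrRight (fun _ : Fin 2 => b.equivFun)) ≪≫ₗ
      (LinearEquiv.curry Tm Tm (Fin 2) ι).symm
  have hcard : Fintype.card (Fin 2) = Fintype.card (Fin 2 × ι) := by
    have := Module.finrank_eq_card_basis ((Pi.basisFun Tm (Fin 2)).map e2)
    simpa [Module.finrank_pi] using this
  have hι : Fintype.card ι = 1 := by
    simp [Fintype.card_prod] at hcard
    omega
  have : Unique ι := Fintype.card_eq_one_iff_nonempty_unique.mp hι |>.some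
  exact ⟨(LinearEquiv.funUnique ι Tm Tm).symm ≪≫ₗ b.equivFun.symm⟩
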